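/- The function u ↦ -u·Φ(-u) + φ(u) tends to 0 as u → +∞ and is asymptotic to -u as u → -∞ (i.e., (-u·Φ(-u) + φ(u)) - (-u) → 0 as u → -∞). -/

import Mathlib

open Filter

noncomputable def stdGaussPDF (u : ℝ) : ℝ := (Real.sqrt (2 * Real.pi))⁻¹ * Real.exp (-u ^ 2 / 2)

noncomputable def stdGaussCDF (u : ℝ) : ℝ := ∫ t in Set.Iic u, stdGaussPDF t

namespace EIaux

open Real MeasureTheory Set

lemma pdf_eq (u : ℝ) : stdGaussPDF u = (Real.sqrt (2 * π))⁻¹ * Real.exp (-(1/2) * u ^ 2) := by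
  unfold stdGaussPDF; ring_nf

lemma pdf_nonneg (u : ℝ) : 0 ≤ stdGaussPDF u := by
  unfold stdGaussPDF
  positivity

lemma pdf_even (u : ℝ) : stdGaussPDF (-u) = stdGaussPDF u := by
  unfold stdGaussPDF; rw [neg_pow]; ring_nf

lemma pdf_integrable : Integrable stdGaussPDF := by
  have := (integrable_exp_neg_mul_sq (b := 1/2) (by norm_num)).const_mul
    (Real.sqrt (2 * π))⁻¹
  exact this.congr (by filter_upwards with u using (pdf_eq u).symm)

lemma pdf_integral : ∫ u : ℝ, stdGaussPDF u = 1 := by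
  have h : ∫ u : ℝ, stdGaussPDF u
      = (Real.sqrt (2 * π))⁻¹ * ∫ u : ℝ, Real.exp (-(1/2) * u ^ 2) := by
    rw [← integral_const_mul]
    congr 1; ext u; exact pdf_eq u
  rw [h, integral_gaussian]
  have : π / (1/2 : ℝ) = 2 * π := by ring
  rw [this, inv_mul_cancel₀]
  positivity

lemma mul_pdf_integrable : Integrable (fun t : ℝ => t * stdGaussPDF t) := by
  have := (integrable_mul_exp_neg_mul_sq (b := 1/2) (by norm_num)).const_mul
    (Real.sqrt (2 * π))⁻¹
  exact this.congr (by filter_upwards with u; rw [pdf_eq]; ring)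

lemma pdf_hasDerivAt (t : ℝ) : HasDerivAt (fun s => -stdGaussPDF s) (t * stdGaussPDF t) t := by
  have h1 : HasDerivAt (fun s : ℝ => -s ^ 2 / 2) (-t) t := by
    have := ((hasDerivAt_pow 2 t).neg).div_const 2
    simpa using this.congr_deriv (by push_cast; ring)
  have h2 : HasDerivAt (fun y => -((Real.sqrt (2 * π))⁻¹ * Real.exp (-y ^ 2 / 2))) _ t :=
    (h1.exp.const_mul (Real.sqrt (2 * π))⁻¹).neg
  unfold stdGaussPDF
  convert h2 using 1
  ring

lemma pdf_tendsto_top : Tendsto stdGaussPDF atTop (nhds 0) := by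
  have h0 : Tendsto (fun s : ℝ => -s ^ 2 / 2) atTop atBot := by
    apply Tendsto.atBot_div_const (by norm_num)
    exact tendsto_neg_atTop_atBot.comp (tendsto_pow_atTop (two_ne_zero))
  have h1 := (Real.tendsto_exp_atBot).comp h0
  have h2 := h1.const_mul (Real.sqrt (2 * π))⁻¹
  rw [mul_zero] at h2
  exact h2.congr (fun u => rfl)

/-- key FTC computation: `∫_{u}^{∞} t φ(t) dt = φ(u)` -/
lemma integral_Ioi_mul_pdf (u : ℝ) : ∫ t in Ioi u, t * stdGaussPDF t = stdGaussPDF u := by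
  have htend : Tendsto (fun s => -stdGaussPDF s) atTop (nhds 0) := by
    rw [← neg_zero]
    exact pdf_tendsto_top.neg
  have := integral_Ioi_of_hasDerivAt_of_tendsto' (f := fun s => -stdGaussPDF s)
    (f' := fun t => t * stdGaussPDF t) (a := u)
    (fun x _ => pdf_hasDerivAt x) mul_pdf_integrable.integrableOn htend
  simpa using this

lemma cdf_neg_eq (u : ℝ) : stdGaussCDF (-u) = ∫ t in Ioi u, stdGaussPDF t := by
  unfold stdGaussCDF
  rw [← integral_comp_neg_Ioi]
  simp_rw [pdf_even]

lemma cdf_add (u : ℝ) : stdGaussCDF u + stdGaussCDF (-u) = 1 := by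
  rw [cdf_neg_eq, stdGaussCDF, ← pdf_integral]
  rw [← setIntegral_union (Iic_disjoint_Ioi le_rfl) measurableSet_Ioi
    pdf_integrable.integrableOn pdf_integrable.integrableOn, Iic_union_Ioi,
    setIntegral_univ]

lemma cdf_le (u : ℝ) (hu : 1 ≤ u) : stdGaussCDF (-u) ≤ stdGaussPDF u := by
  rw [cdf_neg_eq, ← integral_Ioi_mul_pdf]
  apply setIntegral_mono_on pdf_integrable.integrableOn mul_pdf_integrable.integrableOn
    measurableSet_Ioi
  intro t ht
  have h1 : 1 ≤ t := le_of_lt (lt_of_le_of_lt hu ht)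
  nlinarith [pdf_nonneg t]

lemma cdf_nonneg (u : ℝ) : 0 ≤ stdGaussCDF u :=
  setIntegral_nonneg measurableSet_Iic (fun t _ => pdf_nonneg t)


lemma mul_pdf_tendsto_top : Tendsto (fun u => u * stdGaussPDF u) atTop (nhds 0) := by
  have h := (rpow_mul_exp_neg_mul_sq_isLittleO_exp_neg (b := 1/2) (by norm_num) 1)
  have h2 : Tendsto (fun x : ℝ => Real.exp (-(1/2) * x)) atTop (nhds 0) := by
    have : Tendsto (fun x : ℝ => -(1/2) * x) atTop atBot :=
      (tendsto_id (α := ℝ)).const_mul_atTop_of_neg (by norm_num)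
    exact Real.tendsto_exp_atBot.comp this
  have h3 := h.isBigO.trans_tendsto h2
  have h4 := h3.const_mul (Real.sqrt (2 * π))⁻¹
  rw [mul_zero] at h4
  apply h4.congr
  intro u
  rw [Real.rpow_one, pdf_eq]; ring

lemma main_top :
    Tendsto (fun u : ℝ => -u * stdGaussCDF (-u) + stdGaussPDF u) atTop (nhds 0) := by
  have h1 : Tendsto (fun u : ℝ => u * stdGaussCDF (-u)) atTop (nhds 0) := by
    apply tendsto_of_tendsto_of_tendsto_of_le_of_le' tendsto_const_nhds mul_pdf_tendsto_top
    · filter_upwards [eventually_ge_atTop (1:ℝ)] with u hu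
      exact mul_nonneg (by linarith) (cdf_nonneg _)
    · filter_upwards [eventually_ge_atTop (1:ℝ)] with u hu
      exact mul_le_mul_of_nonneg_left (cdf_le u hu) (by linarith)
  have := (h1.neg).add pdf_tendsto_top
  simpa using this

end EIaux

/-- `g(u) = -u·Φ(-u) + φ(u)` tends to `0` as `u → +∞` and is asymptotic to `-u`
as `u → -∞`. -/
theorem EI_factor_asymptotics :
    Tendsto (fun u : ℝ => -u * stdGaussCDF (-u) + stdGaussPDF u) atTop (nhds 0) ∧
    Tendsto (fun u : ℝ => (-u * stdGaussCDF (-u) + stdGaussPDF u) - (-u)) atBot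
      (nhds 0) := by
  constructor
  · exact EIaux.main_top
  · have h := EIaux.main_top.comp tendsto_neg_atBot_atTop
    apply h.congr
    intro u
    have hadd := EIaux.cdf_add u
    simp only [Function.comp_apply, neg_neg, EIaux.pdf_even]
    have h2 : stdGaussCDF u = 1 - stdGaussCDF (-u) := by linarith
    rw [h2]; ring
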